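/- For all q, s ∈ ℕ there exists N ∈ ℕ such that the following holds: for every function Γ : {0,1}^q → {0,1}, every choice of sizes N_1, …, N_q ∈ ℕ, boolean matrices Q_t ∈ {0,1}^{N_t × N_t} with suprank(Q_t) ≤ s for each t ∈ [q], and functions a_t, b_t : [N] → [N_t], there exist x, y ∈ [N] with GT_N(x,y) ≠ Γ(Q_1(a_1(x), b_1(y)), …, Q_q(a_q(x), b_q(y))), where GT_N ∈ {0,1}^{N×N} is the Greater-Than matrix defined by GT_N(x,y) = 1 iff x ≤ y. (The Greater-Than problem is not a bounded boolean combination of matrices of bounded support-rank; hence P^SUPP ⊊ UPP.) -/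

import Mathlib

open Matrix

/-- rank of a general submatrix is at most the rank. -/
lemma my_rank_submatrix_le {k p r : ℕ} (A : Matrix (Fin p) (Fin r) ℝ)
    (f : Fin k → Fin p) (g : Fin k → Fin r) : (A.submatrix f g).rank ≤ A.rank := by
  have h1 : A.submatrix f g =
      (Matrix.of fun i x => if x = f i then (1:ℝ) else 0) * A *
      (Matrix.of fun x j => if x = g j then (1:ℝ) else 0) := by
    ext i j
    simp [Matrix.mul_apply, mul_ite, ite_mul, zero_mul, mul_zero,
      Finset.sum_ite_eq, Finset.sum_ite_eq']
  rw [h1]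
  exact le_trans (Matrix.rank_mul_le_left _ _) (Matrix.rank_mul_le_right _ _)

/-- A triangular-with-nonzero-diagonal pattern inside `A` forces rank ≥ n. -/
lemma my_rank_lb {n p r : ℕ} (A : Matrix (Fin p) (Fin r) ℝ)
    (f : Fin n → Fin p) (g : Fin n → Fin r)
    (hdiag : ∀ i, A (f i) (g i) ≠ 0)
    (htri : (∀ i j : Fin n, j < i → A (f i) (g j) = 0) ∨
            (∀ i j : Fin n, i < j → A (f i) (g j) = 0)) :
    n ≤ A.rank := by
  set M := A.submatrix f g with hM
  have hdet : M.det ≠ 0 := by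
    have hprod : M.det = ∏ i, M i i := by
      rcases htri with h | h
      · exact Matrix.det_of_upperTriangular (fun i j hij => h i j hij)
      · exact Matrix.det_of_lowerTriangular M (fun i j hij => h i j hij)
    rw [hprod]
    exact Finset.prod_ne_zero_iff.mpr fun i _ => hdiag i
  have hunit : IsUnit M := (Matrix.isUnit_iff_isUnit_det M).mpr (isUnit_iff_ne_zero.mpr hdet)
  have := Matrix.rank_of_isUnit M hunit
  have h2 : M.rank ≤ A.rank := my_rank_submatrix_le A f g
  simp only [Fintype.card_fin] at this
  omega

/-- Pre-monochromatic sequence: the color of a pair depends only on the smaller index. -/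
lemma my_pre_ramsey {α : Type} [Fintype α] [DecidableEq α] [Nonempty α] (c : ℕ → ℕ → α) :
    ∀ (L : ℕ) (S : Finset ℕ), (Fintype.card α + 1) ^ L ≤ S.card →
    ∃ (f : Fin L → ℕ) (g : Fin L → α), StrictMono f ∧ (∀ i, f i ∈ S) ∧
      ∀ i j : Fin L, i < j → c (f i) (f j) = g i := by
  intro L
  induction L with
  | zero =>
    intro S _
    exact ⟨Fin.elim0, Fin.elim0, fun i => i.elim0, fun i => i.elim0, fun i => i.elim0⟩
  | succ L ih =>
    intro S hS
    set K := Fintype.card α with hK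
    have hKpos : 1 ≤ K := Fintype.card_pos
    have hPpos : 1 ≤ (K + 1) ^ L := Nat.one_le_pow _ _ (by omega)
    have hSne : S.Nonempty := by
      rw [← Finset.card_pos]
      have : 1 ≤ (K + 1) ^ (L + 1) := Nat.one_le_pow _ _ (by omega)
      omega
    set x₀ := S.min' hSne with hx₀
    set S' := S.erase x₀ with hS'
    have hS'card : S'.card = S.card - 1 := Finset.card_erase_of_mem (S.min'_mem hSne)
    -- pigeonhole: some color fiber of S' is large
    have hmaps : ∀ y ∈ S', c x₀ y ∈ (Finset.univ : Finset α) := fun _ _ => Finset.mem_univ _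
    have hcard : (Finset.univ : Finset α).card * ((K + 1) ^ L - 1) < S'.card := by
      have hpow : (K + 1) ^ (L + 1) = (K + 1) ^ L * (K + 1) := pow_succ _ _
      have h2 : (K + 1) ^ L * (K + 1) ≤ S.card := hpow ▸ hS
      have h3 : K * ((K + 1) ^ L - 1) + (K + 1) ^ L + K ≤ (K + 1) ^ L * (K + 1) := by
        have : (K + 1) ^ L * (K + 1) = K * (K + 1) ^ L + (K + 1) ^ L := by ring
        rw [this]
        have h4 : K * ((K + 1) ^ L - 1) + K = K * (K + 1) ^ L := by
          cases Nat.exists_eq_add_of_le hPpos with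
          | intro P hP => rw [hP, Nat.add_sub_cancel_left]; ring
        omega
      rw [Finset.card_univ, ← hK, hS'card]
      omega
    obtain ⟨a, -, ha⟩ := Finset.exists_lt_card_fiber_of_mul_lt_card_of_maps_to hmaps hcard
    set T := S'.filter (fun y => c x₀ y = a) with hT
    have hTcard : (K + 1) ^ L ≤ T.card := by omega
    obtain ⟨f', g', hf'mono, hf'mem, hf'col⟩ := ih T hTcard
    have hf'T : ∀ i, f' i ∈ T := hf'mem
    have hf'S : ∀ i, f' i ∈ S := fun i =>
      Finset.mem_of_mem_erase (Finset.mem_of_mem_filter _ (hf'T i))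
    have hf'ne : ∀ i, f' i ≠ x₀ := fun i =>
      Finset.ne_of_mem_erase (Finset.mem_of_mem_filter _ (hf'T i))
    have hx₀lt : ∀ i, x₀ < f' i := fun i =>
      lt_of_le_of_ne (S.min'_le _ (hf'S i)) (Ne.symm (hf'ne i))
    refine ⟨Fin.cases x₀ f', Fin.cases a g', ?_, ?_, ?_⟩
    · intro i j hij
      rcases Fin.eq_zero_or_eq_succ j with rfl | ⟨j', rfl⟩
      · exact absurd hij (Fin.not_lt_zero _).elim
      · rcases Fin.eq_zero_or_eq_succ i with rfl | ⟨i', rfl⟩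
        · simpa using hx₀lt j'
        · simp only [Fin.cases_succ]
          exact hf'mono (by exact_mod_cast Fin.succ_lt_succ_iff.mp hij)
    · intro i
      rcases Fin.eq_zero_or_eq_succ i with rfl | ⟨i', rfl⟩
      · simpa using S.min'_mem hSne
      · simpa using hf'S i'
    · intro i j hij
      rcases Fin.eq_zero_or_eq_succ j with rfl | ⟨j', rfl⟩
      · exact absurd hij (Fin.not_lt_zero _).elim
      · rcases Fin.eq_zero_or_eq_succ i with rfl | ⟨i', rfl⟩
        · simp only [Fin.cases_zero, Fin.cases_succ]
          have := hf'T j'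
          rw [hT, Finset.mem_filter] at this
          exact this.2
        · simp only [Fin.cases_succ]
          exact hf'col i' j' (by exact_mod_cast Fin.succ_lt_succ_iff.mp hij)

/-- Finite Ramsey for ordered pairs colored by a fintype. -/
lemma my_ramsey (α : Type) [Fintype α] [Nonempty α] (m : ℕ) :
    ∃ N : ℕ, ∀ c : ℕ → ℕ → α, ∃ (f : Fin m → ℕ) (aa : α), StrictMono f ∧
      (∀ i, f i < N) ∧ ∀ i j : Fin m, i < j → c (f i) (f j) = aa := by
  classical
  set K := Fintype.card α with hK
  set L := K * m + 1 with hL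
  refine ⟨(K + 1) ^ L, fun c => ?_⟩
  obtain ⟨f, g, hmono, hmem, hcol⟩ :=
    my_pre_ramsey c L (Finset.range ((K + 1) ^ L)) (by rw [Finset.card_range])
  -- pigeonhole on g
  have hcard : Fintype.card α * (m - 1) < Fintype.card (Fin L) := by
    rw [Fintype.card_fin, ← hK, hL]
    have : K * (m - 1) ≤ K * m := Nat.mul_le_mul_left _ (Nat.sub_le _ _)
    omega
  obtain ⟨a, ha⟩ := Fintype.exists_lt_card_fiber_of_mul_lt_card (f := g) hcard
  have hfib : m ≤ (Finset.univ.filter fun i => g i = a).card := by omega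
  set e := (Finset.univ.filter fun i => g i = a).orderEmbOfCardLe hfib with he
  have hemem : ∀ i, e i ∈ Finset.univ.filter fun i => g i = a :=
    fun i => Finset.orderEmbOfCardLe_mem _ hfib i
  refine ⟨fun i => f (e i), a, ?_, ?_, ?_⟩
  · exact fun i j hij => hmono (e.strictMono hij)
  · exact fun i => Finset.mem_range.mp (hmem (e i))
  · intro i j hij
    have h1 := hcol (e i) (e j) (e.strictMono hij)
    have h2 := (Finset.mem_filter.mp (hemem i)).2
    rw [h1, h2]

/-- The support-rank of a boolean matrix: the minimum rank of a real matrix with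
the same support. -/
noncomputable def suprank {I J : Type*} [Fintype J] (M : Matrix I J Bool) : ℕ :=
  sInf {r : ℕ | ∃ A : Matrix I J ℝ, A.rank = r ∧
    ∀ i j, A i j = 0 ↔ M i j = false}

theorem stmt15 (q s : ℕ) :
    ∃ N : ℕ, ∀ (Γ : (Fin q → Bool) → Bool) (Nt : Fin q → ℕ)
      (Q : ∀ t, Matrix (Fin (Nt t)) (Fin (Nt t)) Bool),
      (∀ t, suprank (Q t) ≤ s) →
      ∀ a b : ∀ t, Fin N → Fin (Nt t),
        ∃ x y : Fin N, decide (x ≤ y) ≠ Γ (fun t => Q t (a t x) (b t y)) := by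
  classical
  obtain ⟨N, hN⟩ := my_ramsey ((Fin q → Bool) × (Fin q → Bool) × (Fin q → Bool)) (s + 2)
  refine ⟨N, fun Γ Nt Q hQ a b => ?_⟩
  by_contra hcon
  push_neg at hcon
  set c : ℕ → ℕ → ((Fin q → Bool) × (Fin q → Bool) × (Fin q → Bool)) := fun i j =>
    if hi : i < N then if hj : j < N then
      ((fun t => Q t (a t ⟨i, hi⟩) (b t ⟨i, hi⟩)),
       (fun t => Q t (a t ⟨j, hj⟩) (b t ⟨i, hi⟩)),
       (fun t => Q t (a t ⟨i, hi⟩) (b t ⟨j, hj⟩)))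
    else default else default with hc
  obtain ⟨f, ⟨C, D, E⟩, hmono, hlt, hcol⟩ := hN c
  set X : Fin (s + 2) → Fin N := fun i => ⟨f i, hlt i⟩ with hX
  have hXmono : StrictMono X := fun i j hij => by
    simpa [hX, Fin.lt_def] using hmono hij
  have hpat : ∀ i j : Fin (s + 2), i < j →
      ((fun t => Q t (a t (X i)) (b t (X i))) = C ∧
       (fun t => Q t (a t (X j)) (b t (X i))) = D ∧
       (fun t => Q t (a t (X i)) (b t (X j))) = E) := by
    intro i j hij
    have h0 := hcol i j hij
    rw [hc] at h0
    simp only at h0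
    rw [dif_pos (hlt i), dif_pos (hlt j)] at h0
    simpa [Prod.ext_iff] using h0
  have hzero : (0 : Fin (s + 2)) < Fin.last (s + 1) := by
    simp [Fin.lt_def]
  have hCE := hpat 0 (Fin.last (s + 1)) hzero
  have hΓC : Γ C = true := by
    have h1 := hcon (X 0) (X 0)
    rw [hCE.1] at h1
    simpa using h1.symm
  have hΓE : Γ E = true := by
    have h1 := hcon (X 0) (X (Fin.last (s + 1)))
    rw [hCE.2.2] at h1
    have : X 0 ≤ X (Fin.last (s + 1)) := le_of_lt (hXmono hzero)
    simpa [this] using h1.symm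
  have hΓD : Γ D = false := by
    have h1 := hcon (X (Fin.last (s + 1))) (X 0)
    rw [hCE.2.1] at h1
    have : ¬ (X (Fin.last (s + 1)) ≤ X 0) := not_le.mpr (hXmono hzero)
    simpa [this] using h1.symm
  obtain ⟨t, hDE⟩ : ∃ t, D t ≠ E t := by
    by_contra hall
    push_neg at hall
    have : D = E := funext hall
    rw [this, hΓE] at hΓD
    exact absurd hΓD (by simp)
  -- extract a real matrix of rank ≤ s with the same support as Q t
  have hne : {r : ℕ | ∃ A : Matrix (Fin (Nt t)) (Fin (Nt t)) ℝ, A.rank = r ∧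
      ∀ i j, A i j = 0 ↔ Q t i j = false}.Nonempty := by
    refine ⟨_, (Matrix.of fun i j => if Q t i j then (1 : ℝ) else 0), rfl, ?_⟩
    intro i j
    cases h : Q t i j <;> simp [h]
  obtain ⟨A, hArank, hAsupp⟩ := Nat.sInf_mem hne
  have hAr : A.rank ≤ s := by
    rw [hArank]
    exact hQ t
  clear hArank hne
  -- boolean pattern facts
  have hDfact : ∀ i j : Fin (s + 2), i < j → Q t (a t (X j)) (b t (X i)) = D t :=
    fun i j hij => congrFun (hpat i j hij).2.1 t
  have hEfact : ∀ i j : Fin (s + 2), i < j → Q t (a t (X i)) (b t (X j)) = E t :=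
    fun i j hij => congrFun (hpat i j hij).2.2 t
  have hCfact : ∀ i : Fin (s + 2), i < Fin.last (s + 1) →
      Q t (a t (X i)) (b t (X i)) = C t :=
    fun i hi => congrFun (hpat i _ hi).1 t
  have hrk : s + 1 ≤ A.rank := by
    cases hEt : E t with
    | false =>
      rw [hEt] at hDE
      have hDt : D t = true := by simpa using hDE
      cases hCt : C t with
      | false =>
        apply my_rank_lb A (fun i : Fin (s + 1) => a t (X i.succ))
          (fun i : Fin (s + 1) => b t (X i.castSucc))
        · intro i h0
          rw [hAsupp, hDfact i.castSucc i.succ (Fin.castSucc_lt_succ (i := i)), hDt] at h0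
          simp at h0
        · right
          intro i j hij
          rw [hAsupp]
          have hle : i.succ ≤ j.castSucc := by
            rw [Fin.le_def]
            simp only [Fin.val_succ, Fin.coe_castSucc]
            have : (i : ℕ) < (j : ℕ) := hij
            omega
          rcases lt_or_eq_of_le hle with h | h
          · rw [hEfact _ _ h, hEt]
          · rw [h, hCfact _ (Fin.castSucc_lt_last j), hCt]
      | true =>
        apply my_rank_lb A (fun i : Fin (s + 1) => a t (X i.castSucc))
          (fun i : Fin (s + 1) => b t (X i.castSucc))
        · intro i h0
          rw [hAsupp, hCfact _ (Fin.castSucc_lt_last i), hCt] at h0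
          simp at h0
        · right
          intro i j hij
          rw [hAsupp, hEfact _ _ (Fin.castSucc_lt_castSucc_iff.mpr hij), hEt]
    | true =>
      rw [hEt] at hDE
      have hDt : D t = false := by simpa using hDE
      cases hCt : C t with
      | false =>
        apply my_rank_lb A (fun i : Fin (s + 1) => a t (X i.castSucc))
          (fun i : Fin (s + 1) => b t (X i.succ))
        · intro i h0
          rw [hAsupp, hEfact i.castSucc i.succ (Fin.castSucc_lt_succ (i := i)), hEt] at h0
          simp at h0
        · left
          intro i j hij
          rw [hAsupp]
          have hle : j.succ ≤ i.castSucc := by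
            rw [Fin.le_def]
            simp only [Fin.val_succ, Fin.coe_castSucc]
            have : (j : ℕ) < (i : ℕ) := hij
            omega
          rcases lt_or_eq_of_le hle with h | h
          · rw [hDfact _ _ h, hDt]
          · rw [← h, hCfact j.succ (by rw [h]; exact Fin.castSucc_lt_last i), hCt]
      | true =>
        apply my_rank_lb A (fun i : Fin (s + 1) => a t (X i.castSucc))
          (fun i : Fin (s + 1) => b t (X i.castSucc))
        · intro i h0
          rw [hAsupp, hCfact _ (Fin.castSucc_lt_last i), hCt] at h0
          simp at h0
        · left
          intro i j hij
          rw [hAsupp, hDfact _ _ (Fin.castSucc_lt_castSucc_iff.mpr hij), hDt]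
  omega
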